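/- Let a_0, a_1, a_2, ... be i.i.d. complex random variables with 𝔼[log(1 + |a_0|)] < ∞, |a_0| not almost surely constant, and ℙ(a_0 = 0) = 0. Let x_1^(n) = min_k |z_k^(n)| be the smallest root modulus of P_n(z) = ∑_{k=0}^n a_k z^k, and let x_1^(∞) be the infimum of the set {|z| : z ∈ D(0,1), P_∞(z) = 0} ∪ {1}, where P_∞(z) = ∑_{k=0}^∞ a_k z^k. Then x_1^(n) converges to x_1^(∞) almost surely as n → ∞. -/

import Mathlib

open MeasureTheory ProbabilityTheory Polynomial Filter
open scoped ENNReal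

/-- The random Kac polynomial `P_n(z) = ∑_{k=0}^n a_k z^k`. -/
noncomputable def kacPoly {Ω : Type*} (a : ℕ → Ω → ℂ) (n : ℕ) (ω : Ω) : Polynomial ℂ :=
  ∑ k ∈ Finset.range (n + 1), Polynomial.C (a k ω) * Polynomial.X ^ k

/-- The smallest modulus of a root of a complex polynomial. -/
noncomputable def minRootMod (p : Polynomial ℂ) : ℝ :=
  sInf ((‖·‖) '' {z : ℂ | z ∈ p.roots})

/-- The largest modulus of a root of a complex polynomial. -/
noncomputable def maxRootMod (p : Polynomial ℂ) : ℝ :=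
  sSup ((‖·‖) '' {z : ℂ | z ∈ p.roots})

/-- The random power series `P_∞(z) = ∑_{k=0}^∞ a_k z^k` (with junk value `0` where the
series does not converge). -/
noncomputable def kacSeries {Ω : Type*} (a : ℕ → Ω → ℂ) (ω : Ω) (z : ℂ) : ℂ :=
  ∑' k : ℕ, a k ω * z ^ k

/-- `x₁⁽∞⁾`: the infimum of the set `{|z| : z ∈ D(0,1), F z = 0} ∪ {1}`, i.e. the smallest
modulus of a zero of `F` in the open unit disk, with the convention that it equals `1` when
`F` has no zero there. -/
noncomputable def minZeroMod (F : ℂ → ℂ) : ℝ :=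
  sInf (((‖·‖) '' {z : ℂ | ‖z‖ < 1 ∧ F z = 0}) ∪ {1})

/-! ### Auxiliary definitions and lemmas -/

/-- Deterministic Kac polynomial. -/
noncomputable def KP (A : ℕ → ℂ) (n : ℕ) : Polynomial ℂ :=
  ∑ k ∈ Finset.range (n + 1), Polynomial.C (A k) * Polynomial.X ^ k

/-- Deterministic Kac power series. -/
noncomputable def Fser (A : ℕ → ℂ) : ℂ → ℂ := fun z => ∑' k : ℕ, A k * z ^ k

lemma kacPoly_eq {Ω : Type*} (a : ℕ → Ω → ℂ) (n : ℕ) (ω : Ω) :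
    kacPoly a n ω = KP (fun k => a k ω) n := rfl

lemma kacSeries_eq {Ω : Type*} (a : ℕ → Ω → ℂ) (ω : Ω) :
    kacSeries a ω = Fser (fun k => a k ω) := rfl

lemma KP_coeff (A : ℕ → ℂ) (n j : ℕ) :
    (KP A n).coeff j = if j ≤ n then A j else 0 := by
  simp only [KP, Polynomial.finset_sum_coeff, Polynomial.coeff_C_mul, Polynomial.coeff_X_pow,
    mul_ite, mul_one, mul_zero]
  simp only [eq_comm (a := j)]
  rw [Finset.sum_ite_eq' (Finset.range (n+1)) j A]
  simp [Finset.mem_range, Nat.lt_succ_iff]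

lemma KP_eval (A : ℕ → ℂ) (n : ℕ) (z : ℂ) :
    (KP A n).eval z = ∑ k ∈ Finset.range (n + 1), A k * z ^ k := by
  simp [KP, Polynomial.eval_finset_sum]

lemma KP_ne_zero {A : ℕ → ℂ} (h0 : A 0 ≠ 0) (n : ℕ) : KP A n ≠ 0 := by
  intro h
  have := KP_coeff A n 0
  rw [h] at this
  simp at this
  exact h0 this.symm

lemma KP_natDegree {A : ℕ → ℂ} {n : ℕ} (hn : A n ≠ 0) : (KP A n).natDegree = n := by
  apply le_antisymm
  · apply Polynomial.natDegree_sum_le_of_forall_le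
    intro k hk
    refine (Polynomial.natDegree_C_mul_le _ _).trans ?_
    simpa [Polynomial.natDegree_X_pow] using Nat.lt_succ_iff.mp (Finset.mem_range.mp hk)
  · apply Polynomial.le_natDegree_of_ne_zero
    rw [KP_coeff]
    simpa using hn

lemma minRootMod_nonneg (p : Polynomial ℂ) : 0 ≤ minRootMod p := by
  apply Real.sInf_nonneg
  rintro x ⟨z, _, rfl⟩
  exact norm_nonneg z

lemma minRootMod_le {p : Polynomial ℂ} (hp : p ≠ 0) {z : ℂ} (hz : p.eval z = 0) :
    minRootMod p ≤ ‖z‖ := by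
  apply csInf_le
  · exact ⟨0, by rintro x ⟨w, _, rfl⟩; exact norm_nonneg w⟩
  · exact ⟨z, by simp [Polynomial.mem_roots', hp, Polynomial.IsRoot, hz], rfl⟩

lemma le_minRootMod {p : Polynomial ℂ} {r : ℝ} (hne : p.roots ≠ 0)
    (h : ∀ z ∈ p.roots, r ≤ ‖z‖) : r ≤ minRootMod p := by
  obtain ⟨z0, hz0⟩ := Multiset.exists_mem_of_ne_zero hne
  have hmem : ‖z0‖ ∈ (‖·‖) '' {z : ℂ | z ∈ p.roots} := ⟨z0, hz0, rfl⟩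
  apply le_csInf ⟨_, hmem⟩
  rintro x ⟨w, hw, rfl⟩
  exact h w hw

lemma minZeroMod_le_one (F : ℂ → ℂ) : minZeroMod F ≤ 1 := by
  apply csInf_le
  · refine ⟨0, ?_⟩
    rintro x (⟨z, _, rfl⟩ | hx)
    · exact norm_nonneg z
    · simp at hx; simp [hx]
  · exact Or.inr rfl

lemma minZeroMod_nonneg (F : ℂ → ℂ) : 0 ≤ minZeroMod F := by
  apply Real.sInf_nonneg
  rintro x (⟨z, _, rfl⟩ | hx)
  · exact norm_nonneg z
  · simp at hx; simp [hx]

lemma minZeroMod_le (F : ℂ → ℂ) {z : ℂ} (h1 : ‖z‖ < 1) (h2 : F z = 0) :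
    minZeroMod F ≤ ‖z‖ := by
  apply csInf_le
  · refine ⟨0, ?_⟩
    rintro x (⟨w, _, rfl⟩ | hx)
    · exact norm_nonneg w
    · simp at hx; simp [hx]
  · exact Or.inl ⟨z, ⟨h1, h2⟩, rfl⟩

lemma exists_zero_of_lt {F : ℂ → ℂ} {b : ℝ} (hb : minZeroMod F < b) (hb1 : b ≤ 1) :
    ∃ z : ℂ, ‖z‖ < 1 ∧ F z = 0 ∧ ‖z‖ < b := by
  have hne : (((‖·‖) '' {z : ℂ | ‖z‖ < 1 ∧ F z = 0}) ∪ {1} : Set ℝ).Nonempty :=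
    ⟨1, Or.inr rfl⟩
  have hbdd : BddBelow (((‖·‖) '' {z : ℂ | ‖z‖ < 1 ∧ F z = 0}) ∪ {1} : Set ℝ) := by
    refine ⟨0, ?_⟩
    rintro x (⟨w, _, rfl⟩ | hx)
    · exact norm_nonneg w
    · simp at hx; simp [hx]
  obtain ⟨y, hy, hyb⟩ := (csInf_lt_iff hbdd hne).mp hb
  rcases hy with ⟨z, ⟨hz1, hz2⟩, rfl⟩ | hy
  · exact ⟨z, hz1, hz2, hyb⟩
  · simp at hy
    rw [hy] at hyb
    exact absurd (lt_of_lt_of_le hyb hb1) (lt_irrefl 1)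

/-- Elementary multiset fact: product of reals all `≥ c ≥ 0` is at least `c ^ card`. -/
lemma Multiset.pow_card_le_prod_real {m : Multiset ℝ} {c : ℝ} (hc : 0 ≤ c)
    (h : ∀ x ∈ m, c ≤ x) : c ^ Multiset.card m ≤ m.prod := by
  induction m using Multiset.induction_on with
  | empty => simp
  | cons x s ih =>
    simp only [Multiset.card_cons, pow_succ, Multiset.prod_cons]
    have hx : c ≤ x := h x (Multiset.mem_cons_self x s)
    have hs : c ^ Multiset.card s ≤ s.prod := ih fun y hy => h y (Multiset.mem_cons_of_mem hy)
    calc c ^ Multiset.card s * c ≤ s.prod * c :=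
          mul_le_mul_of_nonneg_right hs hc
      _ ≤ s.prod * x := by
          apply mul_le_mul_of_nonneg_left hx
          exact le_trans (pow_nonneg hc _) hs
      _ = x * s.prod := mul_comm _ _

/-- Key coefficient inequality: if all roots of `KP A n` have modulus `> 1 + ε`, then
`‖A j‖ (1+ε)^j ≤ (n choose (n-j)) ‖A 0‖`. -/
lemma coeff_bound {A : ℕ → ℂ} {n j : ℕ} (hj : j ≤ n) (hn : A n ≠ 0) {ε : ℝ} (hε : 0 < ε)
    (hroots : ∀ z ∈ (KP A n).roots, 1 + ε < ‖z‖) :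
    ‖A j‖ * (1 + ε) ^ j ≤ (n.choose (n - j) : ℝ) * ‖A 0‖ := by
  classical
  set p := KP A n with hp
  have hpne : p ≠ 0 := by
    intro h
    have h2 := KP_coeff A n n
    rw [← hp, h] at h2
    simp at h2
    exact hn h2.symm
  have hdeg : p.natDegree = n := KP_natDegree hn
  have hsplits : Splits p := IsAlgClosed.splits p
  have hcard : Multiset.card p.roots = n := by
    rw [Polynomial.splits_iff_card_roots.mp hsplits, hdeg]
  have hlead : p.leadingCoeff = A n := by
    rw [Polynomial.leadingCoeff, hdeg, KP_coeff]; simp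
  have hfact : p = Polynomial.C (A n) * (p.roots.map fun a => X - Polynomial.C a).prod := by
    conv_lhs => rw [hsplits.eq_prod_roots, hlead]
  set s := p.roots with hs
  have hε1 : (0:ℝ) < 1 + ε := by linarith
  set PP : ℝ := (s.map (‖·‖)).prod with hPP
  -- `|A 0| = |A n| * PP`
  have habs0 : ‖A 0‖ = ‖A n‖ * PP := by
    have h0 : A 0 = p.eval 0 := by
      rw [hp, KP_eval]
      rw [Finset.sum_eq_single 0]
      · simp
      · intro b _ hb; simp [zero_pow hb]
      · simp
    have h1 : p.eval 0 = A n * (s.map fun a => -a).prod := by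
      conv_lhs => rw [hfact]
      rw [Polynomial.eval_mul, Polynomial.eval_C, Polynomial.eval_multiset_prod,
        Multiset.map_map]
      simp
    rw [h0, h1, norm_mul, show ‖(s.map fun a => -a).prod‖ = ((s.map fun a => -a).map (‖·‖)).prod from
      map_multiset_prod (normHom : ℂ →*₀ ℝ) _, Multiset.map_map]
    congr 1
    congr 1
    apply Multiset.map_congr rfl
    intro x _
    simp [norm_neg]
  -- coefficient formula
  have hcoeff : A j = A n * ((-1) ^ (n - j) * s.esymm (n - j)) := by
    have h1 : (KP A n).coeff j = A j := by rw [KP_coeff]; simp [hj]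
    have h2 : p.coeff j = A n * ((s.map fun a => X - Polynomial.C a).prod.coeff j) := by
      conv_lhs => rw [hfact]
      rw [Polynomial.coeff_C_mul]
    rw [← h1, ← hp, h2, Multiset.prod_X_sub_C_coeff s (by rw [hcard]; exact hj), hcard]
  -- bound on each sub-multiset product
  have hper : ∀ t ∈ s.powersetCard (n - j),
      ‖t.prod‖ ≤ PP / (1 + ε) ^ j := by
    intro t ht
    rw [Multiset.mem_powersetCard] at ht
    obtain ⟨hts, htc⟩ := ht
    set u := s - t with hu
    have hsu : s = t + u := (tsub_add_cancel_of_le hts).symm.trans (add_comm _ _)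
    have hucard : Multiset.card u = j := by
      rw [hu, Multiset.card_sub hts, hcard, htc, Nat.sub_sub_self hj]
    have hPPsplit : PP = (t.map (‖·‖)).prod * (u.map (‖·‖)).prod := by
      rw [hPP, hsu, Multiset.map_add, Multiset.prod_add]
    have huprod : (1 + ε) ^ j ≤ (u.map (‖·‖)).prod := by
      have := Multiset.pow_card_le_prod_real (m := u.map (‖·‖)) (c := 1 + ε)
        (le_of_lt hε1) ?_
      · rwa [Multiset.card_map, hucard] at this
      · rintro x hx
        rw [Multiset.mem_map] at hx
        obtain ⟨z, hz, rfl⟩ := hx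
        have hzs : z ∈ s := by rw [hsu]; exact Multiset.mem_add.mpr (Or.inr hz)
        exact le_of_lt (hroots z hzs)
    have htprod : ‖t.prod‖ = (t.map (‖·‖)).prod := map_multiset_prod (normHom : ℂ →*₀ ℝ) _
    have htnn : (0:ℝ) ≤ (t.map (‖·‖)).prod := by
      apply Multiset.prod_nonneg
      intro x hx
      rw [Multiset.mem_map] at hx
      obtain ⟨z, _, rfl⟩ := hx
      exact norm_nonneg z
    rw [htprod, le_div_iff₀ (pow_pos hε1 j), hPPsplit]
    exact mul_le_mul_of_nonneg_left huprod htnn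
  -- bound on esymm
  have hesymm : ‖s.esymm (n - j)‖ ≤ (n.choose (n - j) : ℝ) * (PP / (1 + ε) ^ j) := by
    rw [Multiset.esymm]
    calc ‖((s.powersetCard (n - j)).map Multiset.prod).sum‖
        ≤ (((s.powersetCard (n - j)).map Multiset.prod).map norm).sum :=
          norm_multiset_sum_le _
      _ ≤ Multiset.card (((s.powersetCard (n - j)).map Multiset.prod).map norm) •
            (PP / (1 + ε) ^ j) := by
          apply Multiset.sum_le_card_nsmul
          intro x hx
          simp only [Multiset.map_map, Multiset.mem_map, Function.comp_apply] at hx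
          obtain ⟨t, ht, rfl⟩ := hx
          exact hper t ht
      _ = (n.choose (n - j) : ℝ) * (PP / (1 + ε) ^ j) := by
          rw [Multiset.card_map, Multiset.card_map, Multiset.card_powersetCard, hcard,
            nsmul_eq_mul]
  -- conclude
  have habsj : ‖A j‖ = ‖A n‖ * ‖s.esymm (n - j)‖ := by
    rw [hcoeff, norm_mul, norm_mul, norm_pow]
    simp
  rw [habsj, habs0]
  have hAn : (0:ℝ) ≤ ‖A n‖ := norm_nonneg _
  calc ‖A n‖ * ‖s.esymm (n - j)‖ * (1 + ε) ^ j
      ≤ ‖A n‖ * ((n.choose (n - j) : ℝ) * (PP / (1 + ε) ^ j)) * (1 + ε) ^ j := by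
        apply mul_le_mul_of_nonneg_right _ (le_of_lt (pow_pos hε1 j))
        exact mul_le_mul_of_nonneg_left hesymm hAn
    _ = (n.choose (n - j) : ℝ) * (‖A n‖ * PP) := by
        field_simp

/-- The asymptotic estimate ruling out all roots being outside `1 + ε`. -/
lemma eventually_pow_lt (ε θ C : ℝ) (hε : 0 < ε) (hθ : 0 < θ) :
    ∀ᶠ n : ℕ in atTop, ∀ d ≤ 4 * Nat.sqrt n + 4,
      (n : ℝ) ^ d * C < θ * (1 + ε) ^ (n - d) := by
  have hε1 : (0:ℝ) < 1 + ε := by linarith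
  set b : ℝ := Real.log (1 + ε) with hb
  have hbpos : 0 < b := Real.log_pos (by linarith)
  set C' : ℝ := max C 1 with hC'
  have hC1 : (1:ℝ) ≤ C' := le_max_right _ _
  have hC0 : (0:ℝ) < C' := lt_of_lt_of_le one_pos hC1
  have hCC : C ≤ C' := le_max_left _ _
  -- square root tends to infinity
  have hs : Tendsto (fun n : ℕ => Real.sqrt n) atTop atTop := by
    rw [tendsto_atTop_atTop]
    intro x
    refine ⟨(Nat.ceil (max x 0)) ^ 2, fun n hn => ?_⟩
    have h1 : ((Nat.ceil (max x 0) ^ 2 : ℕ) : ℝ) ≤ (n : ℝ) := by exact_mod_cast hn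
    have h2 : Real.sqrt ((Nat.ceil (max x 0) : ℝ) ^ 2) ≤ Real.sqrt n := by
      apply Real.sqrt_le_sqrt
      push_cast at h1 ⊢
      exact h1
    rw [Real.sqrt_sq (by positivity)] at h2
    calc x ≤ max x 0 := le_max_left _ _
      _ ≤ (Nat.ceil (max x 0) : ℝ) := Nat.le_ceil _
      _ ≤ Real.sqrt n := h2
  -- log n / sqrt n → 0
  have h1a : Tendsto (fun n : ℕ => Real.log n / Real.sqrt n) atTop (nhds 0) := by
    have hlog : Tendsto (fun x : ℝ => Real.log x / x) atTop (nhds 0) :=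
      Real.isLittleO_log_id_atTop.tendsto_div_nhds_zero
    have comp : Tendsto (fun n : ℕ => Real.log (Real.sqrt n) / Real.sqrt n) atTop (nhds 0) :=
      hlog.comp hs
    have : Tendsto (fun n : ℕ => 2 * (Real.log (Real.sqrt n) / Real.sqrt n)) atTop (nhds 0) := by
      simpa using comp.const_mul 2
    apply this.congr'
    filter_upwards [eventually_ge_atTop 1] with n hn
    rw [Real.log_sqrt (by positivity)]
    ring
  -- b / sqrt n → 0
  have h1b : Tendsto (fun n : ℕ => b / Real.sqrt n) atTop (nhds 0) :=
    Tendsto.div_atTop tendsto_const_nhds hs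
  -- the main exponent tends to -∞
  have hexp : Tendsto (fun n : ℕ => 8 * Real.sqrt n * (Real.log n + b) - (n : ℝ) * b)
      atTop atBot := by
    have key : Tendsto (fun n : ℕ => (n : ℝ) * ((8 * (Real.log n / Real.sqrt n)
        + 8 * (b / Real.sqrt n)) - b)) atTop atBot := by
      apply Tendsto.atTop_mul_neg (C := -b) (by linarith)
        (tendsto_natCast_atTop_atTop)
      have : Tendsto (fun n : ℕ => 8 * (Real.log n / Real.sqrt n)
          + 8 * (b / Real.sqrt n)) atTop (nhds 0) := by
        simpa using (h1a.const_mul 8).add (h1b.const_mul 8)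
      simpa using this.sub_const b
    apply key.congr'
    filter_upwards [eventually_ge_atTop 1] with n hn
    have hn0 : (0:ℝ) < (n:ℝ) := by exact_mod_cast Nat.lt_of_lt_of_le Nat.zero_lt_one hn
    have hsq0 : 0 < Real.sqrt n := Real.sqrt_pos.mpr hn0
    have hnn : Real.sqrt n * Real.sqrt n = (n:ℝ) := Real.mul_self_sqrt (le_of_lt hn0)
    field_simp
    ring_nf
    rw [Real.sq_sqrt (le_of_lt hn0)]
    ring
  -- eventually the log-inequality holds
  have hlt : ∀ᶠ n : ℕ in atTop,
      ((4 * Nat.sqrt n + 4 : ℕ) : ℝ) * Real.log ((n:ℝ) * (1 + ε)) + Real.log C'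
        < Real.log θ + (n : ℝ) * b := by
    have hev : ∀ᶠ n : ℕ in atTop,
        8 * Real.sqrt n * (Real.log n + b) - (n : ℝ) * b < Real.log θ - Real.log C' :=
      hexp.eventually_lt_atBot _
    filter_upwards [hev, eventually_ge_atTop 16] with n hn h16
    have hn1 : (1:ℕ) ≤ n := le_trans (by norm_num) h16
    have hn0 : (0:ℝ) < (n:ℝ) := by exact_mod_cast Nat.lt_of_lt_of_le Nat.zero_lt_one hn1
    have hlogn : 0 ≤ Real.log n := Real.log_natCast_nonneg n
    have hlogmul : Real.log ((n:ℝ) * (1 + ε)) = Real.log n + b := by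
      rw [Real.log_mul (ne_of_gt hn0) (ne_of_gt hε1)]
    have hL : ((4 * Nat.sqrt n + 4 : ℕ) : ℝ) ≤ 8 * Real.sqrt n := by
      have h4 : 4 ≤ Nat.sqrt n := by
        rw [Nat.le_sqrt]
        omega
      have hcast : (Nat.sqrt n : ℝ) ≤ Real.sqrt n := by
        rw [show (Nat.sqrt n : ℝ) = Real.sqrt ((Nat.sqrt n : ℝ)^2) from
          (Real.sqrt_sq (by positivity)).symm]
        apply Real.sqrt_le_sqrt
        have := Nat.sqrt_le' n
        push_cast
        exact_mod_cast this
      have : ((4 * Nat.sqrt n + 4 : ℕ) : ℝ) ≤ 8 * (Nat.sqrt n : ℝ) := by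
        push_cast
        have : (4:ℝ) ≤ (Nat.sqrt n : ℝ) := by exact_mod_cast h4
        linarith
      linarith
    have hfac : 0 ≤ Real.log n + b := by linarith
    have : ((4 * Nat.sqrt n + 4 : ℕ) : ℝ) * Real.log ((n:ℝ) * (1 + ε))
        ≤ 8 * Real.sqrt n * (Real.log n + b) := by
      rw [hlogmul]
      exact mul_le_mul_of_nonneg_right hL hfac
    linarith
  -- conclude
  filter_upwards [hlt, eventually_ge_atTop 25] with n hn h25
  intro d hd
  have hsqn5 : 5 ≤ Nat.sqrt n := by rw [Nat.le_sqrt]; omega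
  have hLn : 4 * Nat.sqrt n + 4 ≤ n := by
    have h1 : 4 * Nat.sqrt n + 4 ≤ 5 * Nat.sqrt n := by omega
    have h2 : 5 * Nat.sqrt n ≤ Nat.sqrt n * Nat.sqrt n := Nat.mul_le_mul_right _ hsqn5
    have h3 : Nat.sqrt n * Nat.sqrt n ≤ n := by simpa [pow_two] using Nat.sqrt_le' n
    omega
  have hdn : d ≤ n := le_trans hd hLn
  have hn1 : (1:ℝ) ≤ (n:ℝ) := by exact_mod_cast Nat.one_le_iff_ne_zero.mpr (by omega)
  have hn0 : (0:ℝ) < (n:ℝ) := lt_of_lt_of_le one_pos hn1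
  -- multiply target by (1+ε)^d
  have hkey : ((n:ℝ) * (1 + ε)) ^ (4 * Nat.sqrt n + 4) * C' < θ * (1 + ε) ^ n := by
    have hpos : (0:ℝ) < (n:ℝ) * (1 + ε) := by positivity
    have lhs_eq : ((n:ℝ) * (1 + ε)) ^ (4 * Nat.sqrt n + 4) * C'
        = Real.exp (((4 * Nat.sqrt n + 4 : ℕ):ℝ) * Real.log ((n:ℝ) * (1 + ε)) + Real.log C') := by
      rw [Real.exp_add, Real.exp_nat_mul, Real.exp_log hpos, Real.exp_log hC0]
    have rhs_eq : θ * (1 + ε) ^ n = Real.exp (Real.log θ + (n:ℝ) * b) := by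
      rw [Real.exp_add, Real.exp_nat_mul, Real.exp_log hθ, hb, Real.exp_log hε1]
    rw [lhs_eq, rhs_eq]
    exact Real.exp_lt_exp.mpr hn
  have hstep : (n:ℝ) ^ d * C' * (1 + ε) ^ d < θ * (1 + ε) ^ n := by
    have hbase : (1:ℝ) ≤ (n:ℝ) * (1 + ε) := by nlinarith
    calc (n:ℝ) ^ d * C' * (1 + ε) ^ d = ((n:ℝ) * (1 + ε)) ^ d * C' := by
          rw [mul_pow]; ring
      _ ≤ ((n:ℝ) * (1 + ε)) ^ (4 * Nat.sqrt n + 4) * C' := by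
          apply mul_le_mul_of_nonneg_right _ (le_of_lt hC0)
          exact pow_le_pow_right₀ hbase hd
      _ < θ * (1 + ε) ^ n := hkey
  have hsplit : (1 + ε) ^ n = (1 + ε) ^ (n - d) * (1 + ε) ^ d := by
    rw [← pow_add, Nat.sub_add_cancel hdn]
  have : (n:ℝ) ^ d * C * (1 + ε) ^ d < θ * (1 + ε) ^ (n - d) * (1 + ε) ^ d := by
    calc (n:ℝ) ^ d * C * (1 + ε) ^ d ≤ (n:ℝ) ^ d * C' * (1 + ε) ^ d := by
          apply mul_le_mul_of_nonneg_right _ (le_of_lt (pow_pos hε1 d))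
          exact mul_le_mul_of_nonneg_left hCC (by positivity)
      _ < θ * (1 + ε) ^ n := hstep
      _ = θ * (1 + ε) ^ (n - d) * (1 + ε) ^ d := by rw [hsplit]; ring
  exact lt_of_mul_lt_mul_right this (le_of_lt (pow_pos hε1 d))

lemma tuo_Fser {A : ℕ → ℂ}
    (hsum : ∀ ρ : ℝ, 0 < ρ → ρ < 1 → Summable fun k => ‖A k‖ * ρ ^ k)
    {ρ : ℝ} (h0 : 0 < ρ) (h1 : ρ < 1) :
    TendstoUniformlyOn (fun n z => (KP A n).eval z) (Fser A) atTop
      (Metric.closedBall 0 ρ) := by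
  have hu : Summable fun k => ‖A k‖ * ρ ^ k := hsum ρ h0 h1
  have base : TendstoUniformlyOn (fun N => fun z => ∑ k ∈ Finset.range N, A k * z ^ k)
      (Fser A) atTop (Metric.closedBall 0 ρ) := by
    apply tendstoUniformlyOn_tsum_nat hu
    intro k z hz
    rw [Metric.mem_closedBall, dist_zero_right] at hz
    rw [norm_mul, norm_pow]
    apply mul_le_mul_of_nonneg_left _ (norm_nonneg _)
    exact pow_le_pow_left₀ (norm_nonneg _) hz k
  have comp : TendstoUniformlyOn (fun n : ℕ => fun z => ∑ k ∈ Finset.range (n + 1), A k * z ^ k)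
      (Fser A) atTop (Metric.closedBall 0 ρ) := by
    intro v hv
    exact (tendsto_add_atTop_nat 1).eventually (base v hv)
  apply comp.congr
  filter_upwards with n
  intro z _
  simp only [KP_eval]

lemma Fser_diff {A : ℕ → ℂ}
    (hsum : ∀ ρ : ℝ, 0 < ρ → ρ < 1 → Summable fun k => ‖A k‖ * ρ ^ k) :
    DifferentiableOn ℂ (Fser A) (Metric.ball 0 1) := by
  have htlu : TendstoLocallyUniformlyOn (fun n z => (KP A n).eval z) (Fser A) atTop
      (Metric.ball 0 1) := by
    rw [tendstoLocallyUniformlyOn_iff_forall_isCompact Metric.isOpen_ball]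
    intro K hK hKc
    rcases K.eq_empty_or_nonempty with rfl | hKne
    · simp [TendstoUniformlyOn]
    obtain ⟨z0, hz0K, hz0max⟩ := hKc.exists_isMaxOn hKne (continuous_norm.continuousOn)
    have hz0lt : ‖z0‖ < 1 := by simpa using hK hz0K
    set ρ : ℝ := (‖z0‖ + 1) / 2 with hρ
    have hρ0 : 0 < ρ := by positivity
    have hρ1 : ρ < 1 := by rw [hρ]; linarith
    have hsub : K ⊆ Metric.closedBall 0 ρ := by
      intro z hz
      rw [Metric.mem_closedBall, dist_zero_right]
      calc ‖z‖ ≤ ‖z0‖ := hz0max hz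
        _ ≤ ρ := by rw [hρ]; linarith
    exact (tuo_Fser hsum hρ0 hρ1).mono hsub
  apply htlu.differentiableOn _ Metric.isOpen_ball
  filter_upwards with n
  apply Differentiable.differentiableOn
  apply Polynomial.differentiable

lemma Fser_zero (A : ℕ → ℂ) : Fser A 0 = A 0 := by
  have : Fser A 0 = ∑' k : ℕ, A k * (0:ℂ) ^ k := rfl
  rw [this, tsum_eq_single 0]
  · simp
  · intro b hb; simp [zero_pow hb]

/-- Converting window events into the form used by `det_main`. -/
lemma window_convert {Q : ℕ → Prop}
    (h : ∀ᶠ m in atTop, ∃ j ∈ Finset.Ico (m ^ 2) (m ^ 2 + m), Q j) :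
    ∀ᶠ n in atTop, ∃ j ≤ n, n - j ≤ 4 * Nat.sqrt n + 4 ∧ Q j := by
  obtain ⟨M, hM⟩ := eventually_atTop.mp h
  rw [eventually_atTop]
  refine ⟨(M + 2) ^ 2, fun n hn => ?_⟩
  set m := Nat.sqrt n with hmdef
  have h1 : m * m ≤ n := by
    rw [hmdef]; exact Nat.sqrt_le n
  have h2 : n < (m + 1) * (m + 1) := by
    rw [hmdef]; exact Nat.lt_succ_sqrt n
  have hmM : M + 2 ≤ m := by
    rw [hmdef, Nat.le_sqrt]
    calc (M + 2) * (M + 2) = (M + 2) ^ 2 := by ring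
      _ ≤ n := hn
  obtain ⟨j, hjmem, hjQ⟩ := hM (m - 1) (by omega)
  rw [Finset.mem_Ico] at hjmem
  obtain ⟨hj1, hj2⟩ := hjmem
  set k := m - 1 with hkdef
  have hmk : m = k + 1 := by omega
  have hj1' : k * k ≤ j := by rw [pow_two] at hj1; exact hj1
  have hj2' : j < k * k + k := by rw [pow_two] at hj2; exact hj2
  have hn2 : n < k * k + 4 * k + 4 := by
    have : (m + 1) * (m + 1) = k * k + 4 * k + 4 := by rw [hmk]; ring
    omega
  have hn1 : k * k + 2 * k + 1 ≤ n := by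
    have : (k + 1) * (k + 1) = k * k + 2 * k + 1 := by ring
    rw [hmk] at h1
    omega
  have hjn : j ≤ n := by omega
  refine ⟨j, hjn, ?_, hjQ⟩
  have hkm : k ≤ m := by omega
  omega

/-- Main deterministic lemma. -/
lemma det_main (A : ℕ → ℂ) (hA : ∀ k, A k ≠ 0)
    (hsum : ∀ ρ : ℝ, 0 < ρ → ρ < 1 → Summable fun k => ‖A k‖ * ρ ^ k)
    {θ : ℝ} (hθ : 0 < θ)
    (hwin : ∀ᶠ n in atTop, ∃ j ≤ n, n - j ≤ 4 * Nat.sqrt n + 4 ∧ θ ≤ ‖A j‖) :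
    Tendsto (fun n => minRootMod (KP A n)) atTop (nhds (minZeroMod (Fser A))) := by
  set x := minZeroMod (Fser A) with hxdef
  have hx1 : x ≤ 1 := minZeroMod_le_one _
  have hx0 : 0 ≤ x := minZeroMod_nonneg _
  clear_value x
  have hFdiff := Fser_diff hsum
  have hF0 : Fser A 0 ≠ 0 := by rw [Fser_zero]; exact hA 0
  have hcard : ∀ n : ℕ, Multiset.card (KP A n).roots = n := by
    intro n
    rw [Polynomial.splits_iff_card_roots.mp (IsAlgClosed.splits _), KP_natDegree (hA n)]
  suffices H : ∀ ε : ℝ, 0 < ε → ∀ᶠ n in atTop, |minRootMod (KP A n) - x| < ε by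
    rw [Metric.tendsto_atTop]
    intro ε hε
    obtain ⟨N, hN⟩ := eventually_atTop.mp (H ε hε)
    exact ⟨N, fun n hn => by rw [Real.dist_eq]; exact hN n hn⟩
  intro ε hε
  -- lower bound
  have E1 : ∀ᶠ n in atTop, x - ε < minRootMod (KP A n) := by
    rcases lt_or_ge x ε with hle | hlt
    · filter_upwards with n
      have := minRootMod_nonneg (KP A n)
      linarith
    · set r := x - ε / 2 with hrdef
      clear_value r
      have hr0 : 0 < r := by simp only [hrdef]; linarith
      have hr1 : r < 1 := by simp only [hrdef]; linarith
      have hFne : ∀ z : ℂ, ‖z‖ ≤ r → Fser A z ≠ 0 := by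
        intro z hz hz0
        have h1 : ‖z‖ < 1 := by linarith
        have h2 := minZeroMod_le (Fser A) h1 hz0
        rw [← hxdef] at h2
        have h3 : x ≤ r := le_trans h2 hz
        rw [hrdef] at h3
        linarith
      have hcb : Metric.closedBall (0:ℂ) r ⊆ Metric.ball 0 1 := by
        intro z hz
        rw [Metric.mem_closedBall, dist_zero_right] at hz
        rw [Metric.mem_ball, dist_zero_right]
        linarith
      have hcont : ContinuousOn (Fser A) (Metric.closedBall 0 r) :=
        hFdiff.continuousOn.mono hcb
      obtain ⟨w0, hw0, hw0min⟩ := (isCompact_closedBall (0:ℂ) r).exists_isMinOn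
        ⟨0, by simp [le_of_lt hr0]⟩ (continuous_norm.comp_continuousOn hcont)
      set m := ‖Fser A w0‖ with hmdef
      clear_value m
      have hm : 0 < m := by
        rw [hmdef, norm_pos_iff]
        apply hFne
        rw [Metric.mem_closedBall, dist_zero_right] at hw0
        exact hw0
      filter_upwards [Metric.tendstoUniformlyOn_iff.mp (tuo_Fser hsum hr0 hr1) m hm,
        eventually_ge_atTop 1] with n hn hn1
      have hge : r ≤ minRootMod (KP A n) := by
        apply le_minRootMod
        · have hpos : 0 < Multiset.card (KP A n).roots := by rw [hcard n]; omega
          intro hzero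
          rw [hzero] at hpos
          simp at hpos
        · intro z hz
          by_contra hzr
          push_neg at hzr
          have hzmem : z ∈ Metric.closedBall (0:ℂ) r := by
            rw [Metric.mem_closedBall, dist_zero_right]
            exact le_of_lt hzr
          have heval : (KP A n).eval z = 0 := (Polynomial.mem_roots'.mp hz).2
          have hdist := hn z hzmem
          rw [dist_eq_norm, heval, sub_zero] at hdist
          have hminz : m ≤ ‖Fser A z‖ := by rw [hmdef]; exact hw0min hzmem
          linarith
      have : x - ε < r := by simp only [hrdef]; linarith
      linarith
  -- upper bound
  have E2 : ∀ᶠ n in atTop, minRootMod (KP A n) < x + ε := by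
    rcases le_or_gt (x + ε / 2) 1 with hcase | hcase
    · -- inner case: there is a zero of F close to x
      obtain ⟨z0, hz01, hFz0, habs⟩ := exists_zero_of_lt (F := Fser A) (b := x + ε / 4)
        (by simp only [← hxdef]; linarith) (by linarith)
      have hz0ball : z0 ∈ Metric.ball (0:ℂ) 1 := by
        rwa [Metric.mem_ball, dist_zero_right]
      have han : AnalyticAt ℂ (Fser A) z0 :=
        hFdiff.analyticAt (Metric.isOpen_ball.mem_nhds hz0ball)
      rcases han.eventually_eq_zero_or_eventually_ne_zero with hev | hev
      · exfalso
        have hev' : Fser A =ᶠ[nhds z0] 0 := by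
          filter_upwards [hev] with z hz
          simpa using hz
        have hAOn : AnalyticOnNhd ℂ (Fser A) (Metric.ball 0 1) :=
          hFdiff.analyticOnNhd Metric.isOpen_ball
        have heq := hAOn.eqOn_zero_of_preconnected_of_eventuallyEq_zero
          (convex_ball (0:ℂ) 1).isPreconnected hz0ball hev'
        exact hF0 (heq (by simp [Metric.mem_ball]))
      · have hev2 : ∀ᶠ z in nhds z0, z ≠ z0 → Fser A z ≠ 0 := by
          rw [eventually_nhdsWithin_iff] at hev
          filter_upwards [hev] with z hz hzne
          exact hz hzne
        obtain ⟨r0, hr00, hr0prop⟩ := Metric.eventually_nhds_iff.mp hev2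
        set r := min (r0 / 2) (min (ε / 4) ((1 - ‖z0‖) / 2)) with hrdef
        clear_value r
        have hz0lt1 : ‖z0‖ < 1 := hz01
        have hr0 : 0 < r := by
          rw [hrdef]
          apply lt_min (by linarith)
          apply lt_min (by linarith) (by linarith)
        have hrr0 : r < r0 := by
          rw [hrdef]; exact lt_of_le_of_lt (min_le_left _ _) (by linarith)
        have hrε : r ≤ ε / 4 := by
          rw [hrdef]; exact le_trans (min_le_right _ _) (min_le_left _ _)
        have hrz0 : r ≤ (1 - ‖z0‖) / 2 := by
          rw [hrdef]; exact le_trans (min_le_right _ _) (min_le_right _ _)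
        set ρ := (1 + ‖z0‖) / 2 with hρdef
        clear_value ρ
        have hρ0 : 0 < ρ := by rw [hρdef]; positivity
        have hρ1 : ρ < 1 := by simp only [hρdef]; linarith
        have hsub1 : Metric.closedBall z0 r ⊆ Metric.closedBall 0 ρ := by
          intro w hw
          rw [Metric.mem_closedBall] at hw ⊢
          calc dist w 0 ≤ dist w z0 + dist z0 0 := dist_triangle _ _ _
            _ ≤ r + ‖z0‖ := by rw [dist_zero_right]; linarith
            _ ≤ ρ := by simp only [hρdef]; linarith
        have hsubball : Metric.closedBall (0:ℂ) ρ ⊆ Metric.ball 0 1 := by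
          intro w hw
          rw [Metric.mem_closedBall, dist_zero_right] at hw
          rw [Metric.mem_ball, dist_zero_right]
          linarith
        have hsne : ∀ w ∈ Metric.sphere z0 r, Fser A w ≠ 0 := by
          intro w hw
          rw [Metric.mem_sphere] at hw
          apply hr0prop
          · rw [hw]; exact hrr0
          · intro hwz
            rw [hwz, dist_self] at hw
            exact (ne_of_gt hr0) hw.symm
        have hcont : ContinuousOn (Fser A) (Metric.sphere z0 r) := by
          apply hFdiff.continuousOn.mono
          exact (Metric.sphere_subset_closedBall.trans hsub1).trans hsubball
        have hsphne : (Metric.sphere z0 r).Nonempty := NormedSpace.sphere_nonempty.mpr hr0.le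
        obtain ⟨w0, hw0s, hw0min⟩ := (isCompact_sphere z0 r).exists_isMinOn hsphne
          (continuous_norm.comp_continuousOn hcont)
        set m := ‖Fser A w0‖ with hmdef
        clear_value m
        have hm : 0 < m := by rw [hmdef, norm_pos_iff]; exact hsne w0 hw0s
        filter_upwards [Metric.tendstoUniformlyOn_iff.mp (tuo_Fser hsum hρ0 hρ1) (m / 2)
          (half_pos hm)] with n hn
        by_cases hall : ∀ w ∈ Metric.closedBall z0 r, (KP A n).eval w ≠ 0
        · exfalso
          set g := fun w => ((KP A n).eval w)⁻¹ with hgdef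
          have hdiffc : DiffContOnCl ℂ g (Metric.ball z0 r) := by
            constructor
            · apply DifferentiableOn.inv
              · exact ((KP A n).differentiable).differentiableOn
              · exact fun w hw => hall w (Metric.ball_subset_closedBall hw)
            · rw [closure_ball z0 (ne_of_gt hr0)]
              apply ContinuousOn.inv₀
              · exact ((KP A n).continuous).continuousOn
              · exact fun w hw => hall w hw
          have hfr : ∀ w ∈ frontier (Metric.ball z0 r), ‖g w‖ ≤ (m / 2)⁻¹ := by
            rw [frontier_ball z0 (ne_of_gt hr0)]
            intro w hws
            have hwcb : w ∈ Metric.closedBall (0:ℂ) ρ :=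
              hsub1 (Metric.sphere_subset_closedBall hws)
            have hdist := hn w hwcb
            have hwm : m ≤ ‖Fser A w‖ := by rw [hmdef]; exact hw0min hws
            have hPn : m / 2 ≤ ‖(KP A n).eval w‖ := by
              rw [dist_eq_norm] at hdist
              have h1 := norm_sub_norm_le (Fser A w) ((KP A n).eval w)
              linarith
            rw [hgdef, norm_inv]
            exact (inv_le_inv₀ (by linarith) (half_pos hm)).mpr hPn
          have hz0cl : z0 ∈ closure (Metric.ball z0 r) := by
            rw [closure_ball z0 (ne_of_gt hr0)]
            exact Metric.mem_closedBall_self hr0.le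
          have hmax := Complex.norm_le_of_forall_mem_frontier_norm_le
            Metric.isBounded_ball hdiffc hfr hz0cl
          have hPz0 : ‖(KP A n).eval z0‖ < m / 2 := by
            have hz0cb : z0 ∈ Metric.closedBall (0:ℂ) ρ :=
              hsub1 (Metric.mem_closedBall_self hr0.le)
            have := hn z0 hz0cb
            rwa [dist_eq_norm, hFz0, zero_sub, norm_neg] at this
          have hPz0ne : (KP A n).eval z0 ≠ 0 := hall z0 (Metric.mem_closedBall_self hr0.le)
          rw [hgdef, norm_inv] at hmax
          have hpos : 0 < ‖(KP A n).eval z0‖ := norm_pos_iff.mpr hPz0ne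
          have h2 : m / 2 ≤ ‖(KP A n).eval z0‖ :=
            (inv_le_inv₀ hpos (half_pos hm)).mp hmax
          linarith
        · push_neg at hall
          obtain ⟨w, hwcb, hweval⟩ := hall
          have h1 : minRootMod (KP A n) ≤ ‖w‖ :=
            minRootMod_le (KP_ne_zero (hA 0) n) hweval
          have h2 : ‖w‖ ≤ r + ‖z0‖ := by
            calc ‖w‖ = dist w 0 := (dist_zero_right w).symm
              _ ≤ dist w z0 + dist z0 0 := dist_triangle _ _ _
              _ ≤ r + ‖z0‖ := by
                  rw [Metric.mem_closedBall] at hwcb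
                  rw [dist_zero_right]
                  linarith
          have h3 : ‖z0‖ < x + ε / 4 := by exact habs
          linarith
    · -- outer case
      set ε' := x + ε / 2 - 1 with hε'def
      clear_value ε'
      have hε' : 0 < ε' := by simp only [hε'def]; linarith
      filter_upwards [hwin, eventually_pow_lt ε' θ (‖A 0‖) hε' hθ] with n hwn hpow
      by_contra hge
      push_neg at hge
      have hroots : ∀ z ∈ (KP A n).roots, 1 + ε' < ‖z‖ := by
        intro z hz
        have h1 : minRootMod (KP A n) ≤ ‖z‖ :=
          minRootMod_le (KP_ne_zero (hA 0) n) (Polynomial.mem_roots'.mp hz).2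
        have : (1:ℝ) + ε' = x + ε / 2 := by simp only [hε'def]; ring
        linarith
      obtain ⟨j, hjn, hjd, hjθ⟩ := hwn
      have hcb := coeff_bound hjn (hA n) hε' hroots
      have hp := hpow (n - j) hjd
      have hchoose : ((n.choose (n - j)) : ℝ) ≤ (n:ℝ) ^ (n - j) := by
        exact_mod_cast Nat.choose_le_pow n (n - j)
      have hjj : n - (n - j) = j := Nat.sub_sub_self hjn
      rw [hjj] at hp
      have hεpow : (0:ℝ) < (1 + ε') ^ j := pow_pos (by linarith) j
      have c1 : θ * (1 + ε') ^ j ≤ ‖A j‖ * (1 + ε') ^ j :=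
        mul_le_mul_of_nonneg_right hjθ hεpow.le
      have c3 : ((n.choose (n - j)) : ℝ) * ‖A 0‖ ≤
          (n:ℝ) ^ (n - j) * ‖A 0‖ :=
        mul_le_mul_of_nonneg_right hchoose (norm_nonneg _)
      linarith
  filter_upwards [E1, E2] with n h1 h2
  rw [abs_sub_lt_iff]
  constructor <;> linarith

/-- For i.i.d. complex coefficients with `𝔼[log(1+|a₀|)] < ∞`, `|a₀|` not
a.s. constant and `ℙ(a₀ = 0) = 0`, the smallest root modulus `x₁⁽ⁿ⁾` of the Kac polynomial
`P_n` converges almost surely to `x₁⁽∞⁾`, the infimum of the moduli of the zeros of `P_∞`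
in the open unit disk (with the convention `x₁⁽∞⁾ = 1` if there is no such zero). -/
theorem minRootMod_tendsto_ae
    {Ω : Type*} [MeasurableSpace Ω] (μ : Measure Ω) [IsProbabilityMeasure μ]
    (a : ℕ → Ω → ℂ) (hmeas : ∀ k, Measurable (a k))
    (hindep : iIndepFun a μ)
    (hid : ∀ k, IdentDistrib (a k) (a 0) μ μ)
    (hlog : Integrable (fun ω => Real.log (1 + ‖a 0 ω‖)) μ)
    (hnc : ¬ ∃ c : ℝ, 0 ≤ c ∧ μ {ω | ‖a 0 ω‖ = c} = 1)
    (h0 : μ {ω | a 0 ω = 0} = 0) :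
    ∀ᵐ ω ∂μ,
      Tendsto (fun n : ℕ => minRootMod (kacPoly a n ω)) atTop
        (nhds (minZeroMod (kacSeries a ω))) := by
  -- Step 1: choose `θ > 0` with `μ {θ ≤ |a₀|} ≠ 0`
  have hzero_meas : MeasurableSet {ω | a 0 ω = 0} := (hmeas 0) (measurableSet_singleton 0)
  have hone : μ {ω | a 0 ω ≠ 0} = 1 := by
    have hset : {ω | a 0 ω ≠ 0} = {ω | a 0 ω = 0}ᶜ := rfl
    rw [hset, measure_compl hzero_meas (measure_ne_top μ _), h0, measure_univ, tsub_zero]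
  obtain ⟨i0, hi0⟩ : ∃ i : ℕ, μ {ω | 1 / ((i : ℝ) + 1) ≤ ‖a 0 ω‖} ≠ 0 := by
    by_contra hcon
    push_neg at hcon
    have hcover : {ω | a 0 ω ≠ 0} ⊆
        ⋃ i : ℕ, {ω | 1 / ((i : ℝ) + 1) ≤ ‖a 0 ω‖} := by
      intro ω hω
      have habs : 0 < ‖a 0 ω‖ := norm_pos_iff.mpr hω
      obtain ⟨i, hi⟩ := exists_nat_one_div_lt habs
      exact Set.mem_iUnion.mpr ⟨i, le_of_lt hi⟩
    have hle := measure_mono (μ := μ) hcover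
    rw [hone, measure_iUnion_null fun i => hcon i] at hle
    simp at hle
  set θ : ℝ := 1 / ((i0 : ℝ) + 1) with hθdef
  have hθpos : 0 < θ := by rw [hθdef]; positivity
  -- Step 2: a.s. all coefficients are nonzero
  have h1 : ∀ᵐ ω ∂μ, ∀ k, a k ω ≠ 0 := by
    rw [ae_all_iff]
    intro k
    have hk : μ {ω | a k ω = 0} = 0 := by
      have h1' : {ω | a k ω = 0} = a k ⁻¹' {0} := rfl
      have h2' : {ω | a 0 ω = 0} = a 0 ⁻¹' {0} := rfl
      rw [h1', (hid k).measure_mem_eq (measurableSet_singleton 0), ← h2', h0]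
    rw [ae_iff]
    simpa using hk
  -- Step 3: a.s. subexponential growth of the coefficients
  have h2 : ∀ᵐ ω ∂μ, ∀ i : ℕ, ∀ᶠ k in atTop,
      ((i : ℝ) + 1) * Real.log (1 + ‖a k ω‖) ≤ (k : ℝ) := by
    rw [ae_all_iff]
    intro i
    set Y : Ω → ℝ := fun ω => ((i : ℝ) + 1) * Real.log (1 + ‖a 0 ω‖) with hYdef
    have hYint : Integrable Y μ := hlog.const_mul _
    have hY0 : 0 ≤ Y := by
      intro ω
      apply mul_nonneg (by positivity)
      apply Real.log_nonneg
      linarith [norm_nonneg (a 0 ω)]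
    set B : ℕ → Set ℂ := fun k =>
      {z : ℂ | (k : ℝ) < ((i : ℝ) + 1) * Real.log (1 + ‖z‖)} with hBdef
    have hBmeas : ∀ k, MeasurableSet (B k) := by
      intro k
      apply measurableSet_lt measurable_const
      exact (Real.measurable_log.comp
        ((continuous_const.add continuous_norm).measurable)).const_mul _
    have hfin : (∑' k : ℕ, μ {ω | Y ω ∈ Set.Ioi (k : ℝ)}) ≠ ∞ := by
      letI : MeasureSpace Ω := ⟨μ⟩
      haveI : IsProbabilityMeasure (volume : Measure Ω) := ‹IsProbabilityMeasure μ›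
      exact ne_of_lt (ProbabilityTheory.tsum_prob_mem_Ioi_lt_top hYint hY0)
    have hsumS : (∑' k : ℕ, μ (a k ⁻¹' B k)) ≠ ∞ := by
      have heq : ∀ k : ℕ, μ (a k ⁻¹' B k) = μ {ω | Y ω ∈ Set.Ioi (k : ℝ)} := by
        intro k
        rw [(hid k).measure_mem_eq (hBmeas k)]
        rfl
      rw [tsum_congr heq]
      exact hfin
    have hae := ae_eventually_notMem hsumS
    filter_upwards [hae] with ω hω
    filter_upwards [hω] with k hk
    rw [Set.mem_preimage, hBdef] at hk
    simp only [Set.mem_setOf_eq, not_lt] at hk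
    exact hk
  -- Step 4: a.s. windows with a large coefficient
  set T : Set ℂ := {z : ℂ | ‖z‖ < θ} with hTdef
  have hTmeas : MeasurableSet T :=
    measurableSet_lt continuous_norm.measurable measurable_const
  set q : ℝ≥0∞ := μ (a 0 ⁻¹' T) with hqdef
  have hq1 : q < 1 := by
    have hcompl : a 0 ⁻¹' Tᶜ = {ω | θ ≤ ‖a 0 ω‖} := by
      ext ω
      simp [hTdef, not_lt]
    have hadd : q + μ ((a 0 ⁻¹' T)ᶜ) = 1 :=
      (measure_add_measure_compl ((hmeas 0) hTmeas)).trans measure_univ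
    have hne0 : μ ((a 0 ⁻¹' T)ᶜ) ≠ 0 := by
      rw [← Set.preimage_compl, hcompl]
      exact hi0
    calc q < q + μ ((a 0 ⁻¹' T)ᶜ) :=
          ENNReal.lt_add_right (measure_ne_top μ _) hne0
      _ = 1 := hadd
  have h3 : ∀ᵐ ω ∂μ, ∀ᶠ m in atTop,
      ∃ j ∈ Finset.Ico (m ^ 2) (m ^ 2 + m), θ ≤ ‖a j ω‖ := by
    set E : ℕ → Set Ω := fun m => ⋂ j ∈ Finset.Ico (m ^ 2) (m ^ 2 + m), a j ⁻¹' T with hEdef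
    have hEm : ∀ m, μ (E m) = q ^ m := by
      intro m
      rw [hEdef]
      rw [hindep.measure_inter_preimage_eq_mul (Finset.Ico (m ^ 2) (m ^ 2 + m))
        (fun i _ => hTmeas)]
      rw [Finset.prod_congr rfl (fun j _ => ((hid j).measure_mem_eq hTmeas : _)),
        Finset.prod_const, Nat.card_Ico]
      congr 1
      omega
    have htsum : (∑' m : ℕ, μ (E m)) ≠ ∞ := by
      rw [tsum_congr hEm, ENNReal.tsum_geometric, Ne, ENNReal.inv_eq_top,
        tsub_eq_zero_iff_le]
      exact not_le.mpr hq1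
    filter_upwards [ae_eventually_notMem htsum] with ω hω
    filter_upwards [hω] with m hm
    rw [hEdef] at hm
    simp only [Set.mem_iInter, Set.mem_preimage, not_forall] at hm
    obtain ⟨j, hj, hjT⟩ := hm
    refine ⟨j, hj, ?_⟩
    rw [hTdef] at hjT
    simpa [not_lt] using hjT
  -- Step 5: assemble
  filter_upwards [h1, h2, h3] with ω hω1 hω2 hω3
  have hsum : ∀ ρ : ℝ, 0 < ρ → ρ < 1 →
      Summable fun k => ‖(fun k => a k ω) k‖ * ρ ^ k := by
    intro ρ hρ0 hρ1
    have hρinv : (1:ℝ) < ρ⁻¹ := (one_lt_inv₀ hρ0).mpr hρ1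
    have hlogpos : 0 < Real.log ρ⁻¹ := Real.log_pos hρinv
    obtain ⟨i, hi⟩ := exists_nat_one_div_lt hlogpos
    set q' : ℝ := Real.exp (1 / ((i : ℝ) + 1)) * ρ with hq'def
    have hq'0 : 0 ≤ q' := by positivity
    have hq'1 : q' < 1 := by
      rw [hq'def]
      have hexp : Real.exp (1 / ((i : ℝ) + 1)) < ρ⁻¹ := by
        rw [← Real.exp_log (by positivity : (0:ℝ) < ρ⁻¹)]
        exact Real.exp_lt_exp.mpr hi
      calc Real.exp (1 / ((i : ℝ) + 1)) * ρ < ρ⁻¹ * ρ :=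
            mul_lt_mul_of_pos_right hexp hρ0
        _ = 1 := inv_mul_cancel₀ (ne_of_gt hρ0)
    apply summable_of_isBigO_nat (summable_geometric_of_lt_one hq'0 hq'1)
    rw [Asymptotics.isBigO_iff]
    refine ⟨1, ?_⟩
    filter_upwards [hω2 i] with k hk
    have habspos : (0:ℝ) ≤ ‖a k ω‖ := norm_nonneg _
    have hbound : ‖a k ω‖ ≤ Real.exp ((k : ℝ) * (1 / ((i : ℝ) + 1))) := by
      have hlogle : Real.log (1 + ‖a k ω‖) ≤ (k : ℝ) * (1 / ((i : ℝ) + 1)) := by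
        rw [mul_one_div, le_div_iff₀ (by positivity : (0:ℝ) < (i : ℝ) + 1)]
        linarith [hk]
      have h1abs : (0:ℝ) < 1 + ‖a k ω‖ := by linarith
      have := (Real.log_le_iff_le_exp h1abs).mp hlogle
      linarith
    rw [Real.norm_eq_abs, Real.norm_eq_abs]
    have hq'k : (0:ℝ) ≤ q' ^ k := pow_nonneg hq'0 k
    rw [abs_of_nonneg (by positivity : (0:ℝ) ≤ ‖a k ω‖ * ρ ^ k), abs_of_nonneg hq'k,
      one_mul]
    calc ‖a k ω‖ * ρ ^ k = ‖a k ω‖ * ρ ^ k := by rfl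
      _ ≤ Real.exp ((k : ℝ) * (1 / ((i : ℝ) + 1))) * ρ ^ k := by
          apply mul_le_mul_of_nonneg_right hbound (pow_nonneg (le_of_lt hρ0) k)
      _ = (Real.exp (1 / ((i : ℝ) + 1))) ^ k * ρ ^ k := by rw [Real.exp_nat_mul]
      _ = q' ^ k := by rw [hq'def, mul_pow]
  have hwin : ∀ᶠ n in atTop, ∃ j ≤ n, n - j ≤ 4 * Nat.sqrt n + 4 ∧
      θ ≤ ‖(fun k => a k ω) j‖ :=
    window_convert hω3
  exact det_main (fun k => a k ω) hω1 hsum hθpos hwin
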